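/- Let ξ be the trapezoidal fuzzy variable (r1,r2,r3,r4) with r1 < r2 ≤ r3 < r4 and let λ ∈ [0,1]. Then E_λ(ξ) = (1 − λ)·(r1 + r2)/2 + λ·(r3 + r4)/2. -/

import Mathlib

open MeasureTheory Set

/-- Possibility measure of an event `A` built from membership function `μ`
(with the convention `sSup ∅ = 0`, which holds for `Real.sSup`). -/
noncomputable def Pos (μ : ℝ → ℝ) (A : Set ℝ) : ℝ := sSup (μ '' A)

/-- Necessity measure associated with `μ`. -/
noncomputable def Nec (μ : ℝ → ℝ) (A : Set ℝ) : ℝ := 1 - Pos μ Aᶜ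

/-- The parametric measure `m_λ(A) = λ·Pos(A) + (1−λ)·Nec(A)`. -/
noncomputable def mMeas (l : ℝ) (μ : ℝ → ℝ) (A : Set ℝ) : ℝ :=
  l * Pos μ A + (1 - l) * Nec μ A

/-- The `m_λ`-expected value of the fuzzy variable with membership function `μ`:
`E_λ(ξ) = ∫_{−∞}^0 (m_λ([r,∞)) − 1) dr + ∫_0^∞ m_λ([r,∞)) dr`. -/
noncomputable def Eexp (l : ℝ) (μ : ℝ → ℝ) : ℝ :=
  (∫ r in Set.Iic (0:ℝ), (mMeas l μ (Set.Ici r) - 1)) +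
  (∫ r in Set.Ioi (0:ℝ), mMeas l μ (Set.Ici r))

/-- Membership function of the trapezoidal fuzzy variable `(r1,r2,r3,r4)`. -/
noncomputable def trapMF (r1 r2 r3 r4 : ℝ) : ℝ → ℝ := fun x =>
  if r1 ≤ x ∧ x ≤ r2 then (x - r1) / (r2 - r1)
  else if r2 ≤ x ∧ x ≤ r3 then 1
  else if r3 ≤ x ∧ x ≤ r4 then (r4 - x) / (r4 - r3)
  else 0

/-- Membership function of the triangular fuzzy variable `(r1,r2,r4)`. -/
noncomputable def triMF (r1 r2 r4 : ℝ) : ℝ → ℝ := fun x =>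
  if r1 ≤ x ∧ x ≤ r2 then (x - r1) / (r2 - r1)
  else if r2 ≤ x ∧ x ≤ r4 then (r4 - x) / (r4 - r2)
  else 0

/-- Membership function of the trapezoidal fuzzy variable `(a−α, a, b, b+β)`. -/
noncomputable def trapMF2 (a b α β : ℝ) : ℝ → ℝ := fun x =>
  if a - α ≤ x ∧ x ≤ a then 1 - (a - x) / α
  else if a ≤ x ∧ x ≤ b then 1
  else if b ≤ x ∧ x ≤ b + β then 1 - (x - b) / β
  else 0

/-- Membership function of the triangular fuzzy variable `(a−α, a, a+β)`. -/
noncomputable def triMF2 (a α β : ℝ) : ℝ → ℝ := fun x =>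
  if a - α ≤ x ∧ x ≤ a then 1 - (a - x) / α
  else if a ≤ x ∧ x ≤ a + β then 1 - (x - a) / β
  else 0

section aux
variable {r1 r2 r3 r4 : ℝ}


lemma trapMF_le_one (h12 : r1 < r2) (h34 : r3 < r4) (x : ℝ) :
    trapMF r1 r2 r3 r4 x ≤ 1 := by
  simp only [trapMF]; split_ifs with a b c
  · rw [div_le_one (by linarith)]; linarith [a.2]
  · exact le_rfl
  · rw [div_le_one (by linarith)]; linarith [c.1]
  · linarith

lemma trapMF_eq_one (h12 : r1 < r2) (h23 : r2 ≤ r3) (h34 : r3 < r4) {x : ℝ}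
    (h2 : r2 ≤ x) (h3 : x ≤ r3) : trapMF r1 r2 r3 r4 x = 1 := by
  simp only [trapMF]; split_ifs with a b c
  · have hx : x = r2 := le_antisymm a.2 h2
    rw [hx, div_self (sub_ne_zero.mpr (ne_of_gt h12))]
  · rfl
  · have hx : x = r3 := le_antisymm h3 c.1
    rw [hx, div_self (sub_ne_zero.mpr (ne_of_gt h34))]
  · exact absurd ⟨h2, h3⟩ b

lemma sSup_Ici (h12 : r1 < r2) (h23 : r2 ≤ r3) (h34 : r3 < r4) (r : ℝ) :
    sSup (trapMF r1 r2 r3 r4 '' Ici r) =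
      if r ≤ r3 then 1 else if r ≤ r4 then (r4 - r) / (r4 - r3) else 0 := by
  split_ifs with h h'
  · apply IsGreatest.csSup_eq
    constructor
    · exact ⟨max r r2, mem_Ici.mpr (le_max_left _ _),
        trapMF_eq_one h12 h23 h34 (le_max_right _ _) (max_le h h23)⟩
    · rintro y ⟨x, -, rfl⟩; exact trapMF_le_one h12 h34 x
  · have h3 : r3 < r := not_le.mp h
    apply IsGreatest.csSup_eq
    constructor
    · refine ⟨r, mem_Ici.mpr le_rfl, ?_⟩
      simp only [trapMF]
      rw [if_neg (by rintro ⟨-, hc⟩; linarith), if_neg (by rintro ⟨-, hc⟩; linarith),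
        if_pos ⟨by linarith, h'⟩]
    · rintro y ⟨x, hx, rfl⟩
      simp only [mem_Ici] at hx
      simp only [trapMF]; split_ifs with a b c
      · exfalso; linarith [a.2]
      · exfalso; linarith [b.2]
      · gcongr <;> linarith
      · exact div_nonneg (by linarith) (by linarith)
  · have h4 : r4 < r := not_le.mp h'
    apply IsGreatest.csSup_eq
    constructor
    · refine ⟨r, mem_Ici.mpr le_rfl, ?_⟩
      simp only [trapMF]; split_ifs with a b c
      · exfalso; linarith [a.2]
      · exfalso; linarith [b.2]
      · exfalso; linarith [c.2]
      · rfl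
    · rintro y ⟨x, hx, rfl⟩
      simp only [mem_Ici] at hx
      simp only [trapMF]; split_ifs with a b c
      · exfalso; linarith [a.2]
      · exfalso; linarith [b.2]
      · exfalso; linarith [c.2]
      · exact le_rfl

lemma sSup_Iio (h12 : r1 < r2) (h23 : r2 ≤ r3) (h34 : r3 < r4) (r : ℝ) :
    sSup (trapMF r1 r2 r3 r4 '' Iio r) =
      if r ≤ r1 then 0 else if r ≤ r2 then (r - r1) / (r2 - r1) else 1 := by
  split_ifs with h h'
  · apply IsGreatest.csSup_eq
    constructor
    · refine ⟨r - 1, by simp only [mem_Iio]; linarith, ?_⟩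
      simp only [trapMF]; split_ifs with a b c
      · exfalso; linarith [a.1]
      · exfalso; linarith [b.1]
      · exfalso; linarith [c.1]
      · rfl
    · rintro y ⟨x, hx, rfl⟩
      simp only [mem_Iio] at hx
      simp only [trapMF]; split_ifs with a b c
      · exfalso; linarith [a.1]
      · exfalso; linarith [b.1]
      · exfalso; linarith [c.1]
      · exact le_rfl
  · have h1r : r1 < r := not_le.mp h
    have hd21 : (0:ℝ) < r2 - r1 := by linarith
    apply csSup_eq_of_forall_le_of_forall_lt_exists_gt
    · exact (nonempty_Iio).image _
    · rintro y ⟨x, hx, rfl⟩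
      simp only [mem_Iio] at hx
      simp only [trapMF]; split_ifs with a b c
      · gcongr <;> linarith
      · exfalso; linarith [b.1]
      · exfalso; linarith [c.1]
      · exact div_nonneg (by linarith) (by linarith)
    · intro w hw
      set c := (r - r1) / (r2 - r1) with hc
      have hc0 : 0 < c := div_pos (by linarith) hd21
      have hc1 : c ≤ 1 := by rw [hc, div_le_one hd21]; linarith
      set d := (max w 0 + c) / 2 with hd
      have hmw : max w 0 < c := max_lt hw hc0
      have h0m : (0:ℝ) ≤ max w 0 := le_max_right _ _
      have hd0 : 0 ≤ d := by rw [hd]; linarith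
      have hdc : d < c := by rw [hd]; linarith
      have hwd : w < d := by have h1 := le_max_left w 0; rw [hd]; linarith
      refine ⟨trapMF r1 r2 r3 r4 (r1 + d * (r2 - r1)), ⟨r1 + d * (r2 - r1), ?_, rfl⟩, ?_⟩
      · simp only [mem_Iio]
        have hcc : c * (r2 - r1) = r - r1 := div_mul_cancel₀ _ (ne_of_gt hd21)
        nlinarith [mul_lt_mul_of_pos_right hdc hd21]
      · have hval : trapMF r1 r2 r3 r4 (r1 + d * (r2 - r1)) = d := by
          simp only [trapMF]
          rw [if_pos ⟨by nlinarith [mul_nonneg hd0 hd21.le], by nlinarith⟩,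
            add_sub_cancel_left, mul_div_cancel_right₀ d (ne_of_gt hd21)]
        rw [hval]; exact hwd
  · have h2r : r2 < r := not_le.mp h'
    apply IsGreatest.csSup_eq
    constructor
    · exact ⟨r2, by simp only [mem_Iio]; exact h2r, trapMF_eq_one h12 h23 h34 le_rfl h23⟩
    · rintro y ⟨x, -, rfl⟩; exact trapMF_le_one h12 h34 x

end aux

lemma integral_linear' (A B a b : ℝ) :
    (∫ x in a..b, (A + B * x)) = A * (b - a) + B * (b ^ 2 - a ^ 2) / 2 := by
  have h1 : IntervalIntegrable (fun _ : ℝ => A) volume a b := intervalIntegrable_const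
  have h2 : IntervalIntegrable (fun x : ℝ => B * x) volume a b :=
    (continuous_const.mul continuous_id).intervalIntegrable a b
  rw [intervalIntegral.integral_add h1 h2, intervalIntegral.integral_const,
    intervalIntegral.integral_const_mul, integral_id]
  simp only [smul_eq_mul]; ring

lemma Ekey (g : ℝ → ℝ) (a b : ℝ) (hab : a ≤ b)
    (h1 : ∀ x ≤ a, g x = 1) (h0 : ∀ x, b ≤ x → g x = 0)
    (hint : IntegrableOn g (Ioc a b)) :
    (∫ r in Iic (0:ℝ), (g r - 1)) + (∫ r in Ioi (0:ℝ), g r) = a + ∫ x in a..b, g x := by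
  have hIoc : ∀ c d : ℝ, IntegrableOn g (Ioc c d) := by
    intro c d
    have hsplit : Ioc c d = (Ioc c d ∩ Iic a) ∪ ((Ioc c d ∩ Ioc a b) ∪ (Ioc c d ∩ Ioi b)) := by
      ext x
      simp only [mem_union, mem_inter_iff, mem_Ioc, mem_Iic, mem_Ioi]
      constructor
      · intro hx
        rcases le_or_gt x a with h | h
        · exact Or.inl ⟨hx, h⟩
        · rcases le_or_gt x b with h' | h'
          · exact Or.inr (Or.inl ⟨hx, h, h'⟩)
          · exact Or.inr (Or.inr ⟨hx, h'⟩)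
      · rintro (⟨hx, -⟩ | ⟨hx, -⟩ | ⟨hx, -⟩) <;> exact hx
    rw [hsplit]
    refine IntegrableOn.union ?_ (IntegrableOn.union ?_ ?_)
    · refine IntegrableOn.congr_fun (f := fun _ => (1:ℝ)) ?_ ?_
        (measurableSet_Ioc.inter measurableSet_Iic)
      · exact (integrableOn_const_iff).mpr
          (Or.inr ((measure_mono inter_subset_left).trans_lt measure_Ioc_lt_top))
      · intro x hx; exact (h1 x hx.2).symm
    · exact hint.mono_set inter_subset_right
    · refine IntegrableOn.congr_fun (f := fun _ => (0:ℝ)) (integrableOn_zero) ?_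
        (measurableSet_Ioc.inter measurableSet_Ioi)
      intro x hx; exact (h0 x hx.2.le).symm
  have hII : ∀ c d : ℝ, IntervalIntegrable g volume c d := fun c d =>
    intervalIntegrable_iff.mpr (hIoc _ _)
  rcases lt_or_ge 0 a with ha | ha
  · have e1 : (∫ r in Iic (0:ℝ), (g r - 1)) = 0 := by
      rw [setIntegral_congr_fun measurableSet_Iic
        (g := fun _ => (0:ℝ)) (fun x hx => by simp [h1 x (le_trans hx ha.le)]), integral_zero]
    have hb : (0:ℝ) ≤ b := ha.le.trans hab
    have hioi : IntegrableOn g (Ioi b) :=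
      IntegrableOn.congr_fun integrableOn_zero (fun x hx => (h0 x hx.le).symm) measurableSet_Ioi
    have e2 : (∫ r in Ioi (0:ℝ), g r) = ∫ x in (0:ℝ)..b, g x := by
      rw [← Ioc_union_Ioi_eq_Ioi hb,
        setIntegral_union (Ioc_disjoint_Ioi le_rfl) measurableSet_Ioi (hIoc 0 b) hioi,
        setIntegral_congr_fun measurableSet_Ioi
          (g := fun _ => (0:ℝ)) (fun x hx => h0 x hx.le), integral_zero, add_zero,
        intervalIntegral.integral_of_le hb]
    have e3 : (∫ x in (0:ℝ)..a, g x) = a := by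
      rw [intervalIntegral.integral_congr (g := fun _ => (1:ℝ))
        (fun x hx => by rw [uIcc_of_le ha.le] at hx; exact h1 x hx.2),
        intervalIntegral.integral_const]
      simp
    have e4 : (∫ x in (0:ℝ)..a, g x) + (∫ x in a..b, g x) = ∫ x in (0:ℝ)..b, g x :=
      intervalIntegral.integral_add_adjacent_intervals (hII 0 a) (hII a b)
    rw [e1, e2, zero_add, ← e4, e3]
  · have hz : IntegrableOn (fun x => g x - 1) (Iic a) :=
      IntegrableOn.congr_fun integrableOn_zero
        (fun x hx => by simp [h1 x hx]) measurableSet_Iic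
    have hio : IntegrableOn (fun x => g x - 1) (Ioc a 0) :=
      (hIoc a 0).sub ((integrableOn_const_iff).mpr (Or.inr measure_Ioc_lt_top))
    have e1 : (∫ r in Iic (0:ℝ), (g r - 1)) = ∫ x in a..(0:ℝ), (g x - 1) := by
      rw [← Iic_union_Ioc_eq_Iic ha,
        setIntegral_union (Iic_disjoint_Ioc le_rfl) measurableSet_Ioc hz hio,
        setIntegral_congr_fun measurableSet_Iic
          (g := fun _ => (0:ℝ)) (fun x hx => by simp [h1 x hx]),
        integral_zero, zero_add, intervalIntegral.integral_of_le ha]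
    rcases lt_or_ge 0 b with hb | hb
    · have hioi : IntegrableOn g (Ioi b) :=
        IntegrableOn.congr_fun integrableOn_zero (fun x hx => (h0 x hx.le).symm) measurableSet_Ioi
      have e2 : (∫ r in Ioi (0:ℝ), g r) = ∫ x in (0:ℝ)..b, g x := by
        rw [← Ioc_union_Ioi_eq_Ioi hb.le,
          setIntegral_union (Ioc_disjoint_Ioi le_rfl) measurableSet_Ioi (hIoc 0 b) hioi,
          setIntegral_congr_fun measurableSet_Ioi
            (g := fun _ => (0:ℝ)) (fun x hx => h0 x hx.le), integral_zero, add_zero,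
          intervalIntegral.integral_of_le hb.le]
      have e3 : (∫ x in a..(0:ℝ), (g x - 1)) = (∫ x in a..(0:ℝ), g x) + a := by
        rw [intervalIntegral.integral_sub (hII a 0) intervalIntegrable_const,
          intervalIntegral.integral_const]
        simp only [smul_eq_mul, mul_one]; ring
      have e4 := intervalIntegral.integral_add_adjacent_intervals (hII a 0) (hII 0 b)
      rw [e1, e2, e3]; linarith [e4]
    · have e2 : (∫ r in Ioi (0:ℝ), g r) = 0 := by
        rw [setIntegral_congr_fun measurableSet_Ioi
          (g := fun _ => (0:ℝ)) (fun x hx => h0 x (hb.trans hx.le)), integral_zero]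
      have hsub : ∀ c d : ℝ, IntervalIntegrable (fun x => g x - 1) volume c d :=
        fun c d => (hII c d).sub intervalIntegrable_const
      have e4 := intervalIntegral.integral_add_adjacent_intervals (hsub a b) (hsub b 0)
      have e5 : (∫ x in b..(0:ℝ), (g x - 1)) = b := by
        rw [intervalIntegral.integral_congr (g := fun _ => (-1:ℝ))
          (fun x hx => by rw [uIcc_of_le hb] at hx; rw [h0 x hx.1]; ring),
          intervalIntegral.integral_const]
        simp only [smul_eq_mul]; ring
      have e6 : (∫ x in a..b, (g x - 1)) = (∫ x in a..b, g x) - (b - a) := by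
        rw [intervalIntegral.integral_sub (hII a b) intervalIntegrable_const,
          intervalIntegral.integral_const]
        simp only [smul_eq_mul, mul_one]
      rw [e1, e2, add_zero, ← e4, e5, e6]; ring

noncomputable def Gfun (r1 r2 r3 r4 l : ℝ) : ℝ → ℝ := fun r =>
  if r ≤ r1 then 1
  else if r ≤ r2 then l + (1 - l) * ((r2 - r) / (r2 - r1))
  else if r ≤ r3 then l
  else if r ≤ r4 then l * ((r4 - r) / (r4 - r3))
  else 0


theorem stmt_3 (r1 r2 r3 r4 l : ℝ)
    (h12 : r1 < r2) (h23 : r2 ≤ r3) (h34 : r3 < r4)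
    (hl : l ∈ Set.Icc (0:ℝ) 1) :
    Eexp l (trapMF r1 r2 r3 r4) = (1 - l) * (r1 + r2) / 2 + l * (r3 + r4) / 2 := by
  obtain ⟨hl0, hl1⟩ := hl
  have h21 : r2 - r1 ≠ 0 := sub_ne_zero.mpr (ne_of_gt h12)
  have h43 : r4 - r3 ≠ 0 := sub_ne_zero.mpr (ne_of_gt h34)
  have hG : ∀ r : ℝ, mMeas l (trapMF r1 r2 r3 r4) (Ici r) = Gfun r1 r2 r3 r4 l r := by
    intro r
    have key1 : (1:ℝ) - (r - r1) / (r2 - r1) = (r2 - r) / (r2 - r1) := by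
      rw [sub_eq_iff_eq_add, ← add_div, eq_div_iff h21]; ring
    simp only [mMeas, Nec, Pos, compl_Ici, sSup_Ici h12 h23 h34 r, sSup_Iio h12 h23 h34 r, Gfun]
    split_ifs <;> first | (exfalso; linarith) | ring1 | (rw [key1]; ring1)
  -- piecewise description on the three subintervals
  have heq1 : EqOn (fun x => l + (1 - l) * ((r2 - x) / (r2 - r1)))
      (Gfun r1 r2 r3 r4 l) (Ioc r1 r2) := by
    intro x hx
    simp only [Gfun]
    rw [if_neg (not_le.mpr hx.1), if_pos hx.2]
  have heq2 : EqOn (fun _ : ℝ => l) (Gfun r1 r2 r3 r4 l) (Ioc r2 r3) := by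
    intro x hx
    simp only [Gfun]
    rw [if_neg (by push_neg; linarith [hx.1]), if_neg (not_le.mpr hx.1), if_pos hx.2]
  have heq3 : EqOn (fun x => l * ((r4 - x) / (r4 - r3)))
      (Gfun r1 r2 r3 r4 l) (Ioc r3 r4) := by
    intro x hx
    simp only [Gfun]
    rw [if_neg (by push_neg; linarith [hx.1]), if_neg (by push_neg; linarith [hx.1]),
      if_neg (not_le.mpr hx.1), if_pos hx.2]
  have i1 : IntegrableOn (Gfun r1 r2 r3 r4 l) (Ioc r1 r2) :=
    IntegrableOn.congr_fun ((by fun_prop : Continuous fun x : ℝ =>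
      l + (1 - l) * ((r2 - x) / (r2 - r1))).integrableOn_Ioc) heq1 measurableSet_Ioc
  have i2 : IntegrableOn (Gfun r1 r2 r3 r4 l) (Ioc r2 r3) :=
    IntegrableOn.congr_fun (continuous_const.integrableOn_Ioc) heq2 measurableSet_Ioc
  have i3 : IntegrableOn (Gfun r1 r2 r3 r4 l) (Ioc r3 r4) :=
    IntegrableOn.congr_fun ((by fun_prop : Continuous fun x : ℝ =>
      l * ((r4 - x) / (r4 - r3))).integrableOn_Ioc) heq3 measurableSet_Ioc
  have hGint : IntegrableOn (Gfun r1 r2 r3 r4 l) (Ioc r1 r4) := by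
    have hu : Ioc r1 r4 = Ioc r1 r2 ∪ (Ioc r2 r3 ∪ Ioc r3 r4) := by
      rw [Ioc_union_Ioc_eq_Ioc h23 h34.le, Ioc_union_Ioc_eq_Ioc h12.le (h23.trans h34.le)]
    rw [hu]; exact i1.union (i2.union i3)
  have hG1 : ∀ x ≤ r1, Gfun r1 r2 r3 r4 l x = 1 := fun x hx => by
    simp only [Gfun]; rw [if_pos hx]
  have hG0 : ∀ x, r4 ≤ x → Gfun r1 r2 r3 r4 l x = 0 := by
    intro x hx
    simp only [Gfun]
    split_ifs with a b c d
    · linarith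
    · linarith
    · linarith
    · rw [show r4 - x = 0 by linarith]; simp
    · rfl
  -- rewrite Eexp and apply Ekey
  have key := Ekey (Gfun r1 r2 r3 r4 l) r1 r4 (by linarith) hG1 hG0 hGint
  have hEexp : Eexp l (trapMF r1 r2 r3 r4)
      = r1 + ∫ x in r1..r4, Gfun r1 r2 r3 r4 l x := by
    simp only [Eexp, hG]; exact key
  rw [hEexp]
  -- compute the interval integral
  have ii1 : IntervalIntegrable (Gfun r1 r2 r3 r4 l) volume r1 r2 :=
    intervalIntegrable_iff.mpr (by rw [uIoc_of_le h12.le]; exact i1)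
  have ii2 : IntervalIntegrable (Gfun r1 r2 r3 r4 l) volume r2 r3 :=
    intervalIntegrable_iff.mpr (by rw [uIoc_of_le h23]; exact i2)
  have ii3 : IntervalIntegrable (Gfun r1 r2 r3 r4 l) volume r3 r4 :=
    intervalIntegrable_iff.mpr (by rw [uIoc_of_le h34.le]; exact i3)
  have split : (∫ x in r1..r2, Gfun r1 r2 r3 r4 l x) + (∫ x in r2..r3, Gfun r1 r2 r3 r4 l x)
      + (∫ x in r3..r4, Gfun r1 r2 r3 r4 l x) = ∫ x in r1..r4, Gfun r1 r2 r3 r4 l x := by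
    rw [intervalIntegral.integral_add_adjacent_intervals ii1 ii2,
      intervalIntegral.integral_add_adjacent_intervals (ii1.trans ii2) ii3]
  have v1 : (∫ x in r1..r2, Gfun r1 r2 r3 r4 l x)
      = l * (r2 - r1) + (1 - l) * (r2 - r1) / 2 := by
    rw [intervalIntegral.integral_congr (g := fun x =>
        (l + (1 - l) * r2 / (r2 - r1)) + (-((1 - l) / (r2 - r1))) * x) ?_, integral_linear']
    · field_simp; ring
    · intro x hx
      rw [uIcc_of_le h12.le] at hx
      simp only [Gfun]
      rcases eq_or_lt_of_le hx.1 with rfl | hlt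
      · rw [if_pos le_rfl]; field_simp; ring
      · rw [if_neg (not_le.mpr hlt), if_pos hx.2]; field_simp; ring
  have v2 : (∫ x in r2..r3, Gfun r1 r2 r3 r4 l x) = l * (r3 - r2) := by
    rw [intervalIntegral.integral_congr (g := fun _ : ℝ => l) ?_,
      intervalIntegral.integral_const]
    · simp [smul_eq_mul, mul_comm]
    · intro x hx
      rw [uIcc_of_le h23] at hx
      simp only [Gfun]
      rw [if_neg (by push_neg; linarith [hx.1])]
      by_cases h : x ≤ r2
      · rw [if_pos h]
        have hx2 : x = r2 := le_antisymm h hx.1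
        subst hx2; simp
      · rw [if_neg h, if_pos hx.2]
  have v3 : (∫ x in r3..r4, Gfun r1 r2 r3 r4 l x) = l * (r4 - r3) / 2 := by
    rw [intervalIntegral.integral_congr (g := fun x =>
        (l * r4 / (r4 - r3)) + (-(l / (r4 - r3))) * x) ?_, integral_linear']
    · field_simp; ring
    · intro x hx
      rw [uIcc_of_le h34.le] at hx
      simp only [Gfun]
      rw [if_neg (by push_neg; linarith [hx.1])]
      by_cases h2 : x ≤ r2
      · have hx2 : x = r2 := le_antisymm h2 (h23.trans hx.1)
        have h32 : r3 = r2 := le_antisymm (hx2 ▸ hx.1) h23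
        rw [if_pos h2, hx2, h32]
        have hne : r4 - r2 ≠ 0 := by rw [← h32]; exact h43
        field_simp
        ring
      rw [if_neg h2]
      by_cases h : x ≤ r3
      · have hx3 : x = r3 := le_antisymm h hx.1
        subst hx3
        rw [if_pos le_rfl]; field_simp
        ring
      · rw [if_neg h, if_pos hx.2]; field_simp; ring
  rw [← split, v1, v2, v3]; ring
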